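/- Let ε > 0, b > 0, m ≥ 1, and let μ_init < μ_upd be reals with μ_upd − μ_init = εb. Let S ⊆ {1,…,m} with |S| = d·m (so d ∈ [0,1] is the fraction of appeared users), and let x₁, …, x_m be independent random variables with x_i ~ Laplace(μ_upd, b) for i ∈ S and x_i ~ Laplace(μ_init, b) for i ∉ S, together with an independent L ~ Laplace(0, 1/(εm)). Define the estimator d̃ = ((1/m)·∑_{i=1}^m x_i − μ_init)/(μ_upd − μ_init) + L. Then E[d̃] = d and Var(d̃) = E[(d̃ − d)²] = 2(m + 1)/(m²ε²), independently of the choice of μ_init, μ_upd and b. -/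

import Mathlib

open MeasureTheory ProbabilityTheory
open Real Set
open scoped NNReal ENNReal

/-- The density of the Laplace distribution with location `μ` and scale `b`. -/
noncomputable def laplacePdf (μ b x : ℝ) : ℝ :=
  (1 / (2 * b)) * Real.exp (-|x - μ| / b)

/-- The Laplace distribution with location `μ` and scale `b`, as a measure on ℝ. -/
noncomputable def laplaceMeasure (μ b : ℝ) : Measure ℝ :=
  volume.withDensity fun x => ENNReal.ofReal (laplacePdf μ b x)


lemma auxA (n : ℕ) : IntegrableOn (fun t : ℝ => t ^ n * Real.exp (-t)) (Set.Ioi 0) := by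
  have h := Real.GammaIntegral_convergent (s := n + 1) (by positivity)
  refine h.congr_fun (fun t ht => ?_) measurableSet_Ioi
  have : (t : ℝ) ^ ((n : ℝ) + 1 - 1) = t ^ n := by
    rw [add_sub_cancel_right, Real.rpow_natCast]
  simp only [this]; ring

lemma auxAval (n : ℕ) : ∫ t in Set.Ioi (0:ℝ), t ^ n * Real.exp (-t) = (n.factorial : ℝ) := by
  have h := Real.integral_rpow_mul_exp_neg_mul_Ioi (a := n + 1) (r := 1) (by positivity) one_pos
  simp only [one_mul] at h
  rw [show ((n : ℝ) + 1 - 1) = (n : ℝ) by ring] at h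
  have h2 : ∫ t in Set.Ioi (0:ℝ), t ^ (n : ℝ) * Real.exp (-t) =
      ∫ t in Set.Ioi (0:ℝ), t ^ n * Real.exp (-t) := by
    refine setIntegral_congr_fun measurableSet_Ioi (fun t ht => ?_)
    rw [Real.rpow_natCast]
  rw [h2] at h
  rw [h, Real.Gamma_nat_eq_factorial]
  simp

lemma integrable_comp_abs' {f : ℝ → ℝ} (hf : IntegrableOn f (Set.Ioi 0)) :
    Integrable fun x : ℝ => f |x| := by
  have hIoi : IntegrableOn (fun x : ℝ => f |x|) (Set.Ioi 0) := by
    refine hf.congr_fun (fun t ht => ?_) measurableSet_Ioi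
    rw [abs_of_pos ht]
  have hIic : IntegrableOn (fun x : ℝ => f |x|) (Set.Iic 0) := by
    rw [← Measure.map_neg_eq_self (volume : Measure ℝ)]
    have m : MeasurableEmbedding fun x : ℝ => -x := (Homeomorph.neg ℝ).measurableEmbedding
    rw [m.integrableOn_map_iff]
    simp_rw [Function.comp_def, abs_neg, neg_preimage, neg_Iic, neg_zero]
    exact (integrableOn_Ici_iff_integrableOn_Ioi).mpr hIoi
  have := hIic.union hIoi
  rwa [Set.Iic_union_Ioi, integrableOn_univ] at this

lemma habs_int (n : ℕ) : Integrable (fun t : ℝ => t ^ n * Real.exp (-|t|)) := by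
  have hg : Integrable (fun t : ℝ => |t| ^ n * Real.exp (-|t|)) :=
    integrable_comp_abs' (f := fun y => y ^ n * Real.exp (-y)) (auxA n)
  refine hg.mono' ?_ ?_
  · exact (continuous_pow n |>.mul (Real.continuous_exp.comp continuous_abs.neg)).aestronglyMeasurable
  · filter_upwards with t
    rw [Real.norm_eq_abs, abs_mul, abs_pow, abs_of_pos (Real.exp_pos _)]

lemma Jeven (n : ℕ) (hn : Even n) :
    ∫ t : ℝ, t ^ n * Real.exp (-|t|) = 2 * (n.factorial : ℝ) := by
  have h : ∀ t : ℝ, t ^ n * Real.exp (-|t|) = |t| ^ n * Real.exp (-|t|) := by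
    intro t; rw [hn.pow_abs]
  simp_rw [h]
  rw [integral_comp_abs (f := fun y => y ^ n * Real.exp (-y)), auxAval]

lemma J1 : ∫ t : ℝ, t * Real.exp (-|t|) = 0 := by
  have key : ∫ t : ℝ, t * Real.exp (-|t|) = ∫ t : ℝ, (-t) * Real.exp (-|(-t)|) := by
    nth_rewrite 1 [← Measure.map_neg_eq_self (volume : Measure ℝ)]
    exact ((Homeomorph.neg ℝ).measurableEmbedding).integral_map _
  simp only [abs_neg, neg_mul] at key
  rw [integral_neg] at key
  linarith

lemma J0 : ∫ t : ℝ, Real.exp (-|t|) = 2 := by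
  have := Jeven 0 Even.zero
  simpa using this

lemma J2 : ∫ t : ℝ, t ^ 2 * Real.exp (-|t|) = 4 := by
  have := Jeven 2 even_two
  norm_num [Nat.factorial] at this
  linarith

lemma laplace_int (μ b : ℝ) (hb : 0 < b) (f : ℝ → ℝ)
    (hint : Integrable (fun t : ℝ => Real.exp (-|t|) * f (b * t + μ))) :
    Integrable (fun x => laplacePdf μ b x * f x) ∧
      ∫ x, laplacePdf μ b x * f x = (1 / 2) * ∫ t : ℝ, Real.exp (-|t|) * f (b * t + μ) := by
  set G : ℝ → ℝ := fun t => Real.exp (-|t|) * f (b * t + μ) with hG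
  have hpt : ∀ x : ℝ, laplacePdf μ b x * f x = (1 / (2 * b)) * G (b⁻¹ * (x - μ)) := by
    intro x
    have h1 : |b⁻¹ * (x - μ)| = |x - μ| / b := by
      rw [abs_mul, abs_inv, abs_of_pos hb]
      rw [inv_mul_eq_div]
    have h2 : b * (b⁻¹ * (x - μ)) + μ = x := by field_simp; ring
    simp only [hG, h1, h2, laplacePdf]
    rw [neg_div]
    ring
  have hH : Integrable (fun x : ℝ => G (b⁻¹ * x)) :=
    (integrable_comp_mul_left_iff G (inv_ne_zero hb.ne')).2 hint
  have hHs : Integrable (fun x : ℝ => G (b⁻¹ * (x - μ))) := hH.comp_sub_right μ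
  constructor
  · simp_rw [hpt]
    exact hHs.const_mul _
  · simp_rw [hpt]
    rw [integral_const_mul]
    have e1 : ∫ x : ℝ, G (b⁻¹ * (x - μ)) = ∫ x : ℝ, G (b⁻¹ * x) := by
      exact integral_sub_right_eq_self (fun y => G (b⁻¹ * y)) μ
    have e2 : ∫ x : ℝ, G (b⁻¹ * x) = |b| • ∫ t, G t := Measure.integral_comp_inv_mul_left G b
    rw [e1, e2, abs_of_pos hb, smul_eq_mul, ← mul_assoc]
    congr 1
    field_simp

lemma laplacePdf_nonneg (μ b : ℝ) (hb : 0 < b) (x : ℝ) : 0 ≤ laplacePdf μ b x := by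
  unfold laplacePdf; positivity

lemma laplace_mom0 (μ b : ℝ) (hb : 0 < b) :
    Integrable (fun x => laplacePdf μ b x) ∧ ∫ x, laplacePdf μ b x = 1 := by
  have h := laplace_int μ b hb (fun _ => 1) (by simpa using habs_int 0)
  simp only [mul_one] at h
  refine ⟨h.1, ?_⟩
  rw [h.2, J0]; norm_num

lemma laplace_mom1 (μ b : ℝ) (hb : 0 < b) :
    Integrable (fun x => laplacePdf μ b x * x) ∧ ∫ x, laplacePdf μ b x * x = μ := by
  have e : (fun t : ℝ => Real.exp (-|t|) * ((fun x : ℝ => x) (b * t + μ)))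
      = fun t : ℝ => b * (t * Real.exp (-|t|)) + μ * Real.exp (-|t|) := by
    funext t; simp; ring
  have hA : Integrable (fun t : ℝ => b * (t * Real.exp (-|t|))) := by
    simpa [pow_one] using ((habs_int 1).const_mul b)
  have hB : Integrable (fun t : ℝ => μ * Real.exp (-|t|)) := by
    simpa using ((habs_int 0).const_mul μ)
  have hint : Integrable (fun t : ℝ => Real.exp (-|t|) * ((fun x : ℝ => x) (b * t + μ))) := by
    rw [e]; exact hA.add hB
  have h := laplace_int μ b hb (fun x => x) hint
  refine ⟨h.1, ?_⟩
  rw [h.2, e, integral_add hA hB, integral_const_mul, integral_const_mul, J1, J0]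
  ring

lemma laplace_mom2 (μ b : ℝ) (hb : 0 < b) :
    Integrable (fun x => laplacePdf μ b x * x ^ 2) ∧
      ∫ x, laplacePdf μ b x * x ^ 2 = μ ^ 2 + 2 * b ^ 2 := by
  have e : (fun t : ℝ => Real.exp (-|t|) * ((fun x : ℝ => x ^ 2) (b * t + μ)))
      = fun t : ℝ => (b ^ 2 * (t ^ 2 * Real.exp (-|t|)) + 2 * b * μ * (t * Real.exp (-|t|)))
          + μ ^ 2 * Real.exp (-|t|) := by
    funext t; simp; ring
  have hA : Integrable (fun t : ℝ => b ^ 2 * (t ^ 2 * Real.exp (-|t|))) :=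
    (habs_int 2).const_mul _
  have hA' : Integrable (fun t : ℝ => 2 * b * μ * (t * Real.exp (-|t|))) := by
    simpa [pow_one] using ((habs_int 1).const_mul (2 * b * μ))
  have hB : Integrable (fun t : ℝ => μ ^ 2 * Real.exp (-|t|)) := by
    simpa using ((habs_int 0).const_mul (μ ^ 2))
  have hAA' : Integrable (fun t : ℝ => b ^ 2 * (t ^ 2 * Real.exp (-|t|))
      + 2 * b * μ * (t * Real.exp (-|t|))) := by exact hA.add hA'
  have hint : Integrable (fun t : ℝ => Real.exp (-|t|) * ((fun x : ℝ => x ^ 2) (b * t + μ))) := by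
    rw [e]; exact hAA'.add hB
  have h := laplace_int μ b hb (fun x => x ^ 2) hint
  refine ⟨h.1, ?_⟩
  rw [h.2, e, integral_add hAA' hB, integral_add hA hA',
    integral_const_mul, integral_const_mul, integral_const_mul, J0, J1, J2]
  ring

lemma laplacePdf_meas (μ b : ℝ) : Measurable (laplacePdf μ b) := by
  unfold laplacePdf
  fun_prop

lemma laplace_integrable_iff (μ b : ℝ) (hb : 0 < b) (g : ℝ → ℝ) :
    Integrable g (laplaceMeasure μ b) ↔ Integrable (fun x => laplacePdf μ b x * g x) := by
  rw [laplaceMeasure, integrable_withDensity_iff ((laplacePdf_meas μ b).ennreal_ofReal) (by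
    filter_upwards with x; exact ENNReal.ofReal_lt_top)]
  constructor <;> intro h <;> refine h.congr (by
    filter_upwards with x
    rw [ENNReal.toReal_ofReal (laplacePdf_nonneg μ b hb x)]
    ring)

lemma laplace_integral_eq (μ b : ℝ) (hb : 0 < b) (g : ℝ → ℝ) :
    ∫ x, g x ∂(laplaceMeasure μ b) = ∫ x, laplacePdf μ b x * g x := by
  rw [laplaceMeasure]
  have : (fun x => ENNReal.ofReal (laplacePdf μ b x))
      = fun x => ((Real.toNNReal (laplacePdf μ b x) : ℝ≥0) : ℝ≥0∞) := rfl
  rw [this, integral_withDensity_eq_integral_smul ((laplacePdf_meas μ b).real_toNNReal)]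
  congr 1 with x
  rw [NNReal.smul_def, Real.coe_toNNReal _ (laplacePdf_nonneg μ b hb x), smul_eq_mul]

lemma laplace_isProb (μ b : ℝ) (hb : 0 < b) : IsProbabilityMeasure (laplaceMeasure μ b) := by
  constructor
  rw [laplaceMeasure, withDensity_apply _ MeasurableSet.univ, Measure.restrict_univ]
  rw [← ofReal_integral_eq_lintegral_ofReal (laplace_mom0 μ b hb).1
    (by filter_upwards with x; exact laplacePdf_nonneg μ b hb x)]
  rw [(laplace_mom0 μ b hb).2]
  simp

lemma rv_facts {Ω : Type*} [MeasureSpace Ω] [IsProbabilityMeasure (ℙ : Measure Ω)]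
    (X : Ω → ℝ) (hX : Measurable X) (μ b : ℝ) (hb : 0 < b)
    (hlaw : Measure.map X ℙ = laplaceMeasure μ b) :
    Integrable X ℙ ∧ (∫ ω, X ω ∂ℙ) = μ ∧ MemLp X 2 ℙ ∧
      (∫ ω, (X ω) ^ 2 ∂ℙ) = μ ^ 2 + 2 * b ^ 2 := by
  have hid : Integrable (fun x : ℝ => x) (laplaceMeasure μ b) := by
    rw [laplace_integrable_iff μ b hb]
    exact (laplace_mom1 μ b hb).1
  have hsq : Integrable (fun x : ℝ => x ^ 2) (laplaceMeasure μ b) := by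
    rw [laplace_integrable_iff μ b hb]
    exact (laplace_mom2 μ b hb).1
  refine ⟨?_, ?_, ?_, ?_⟩
  · exact (integrable_map_measure aestronglyMeasurable_id hX.aemeasurable).1
      (by rw [hlaw]; exact hid)
  · have := integral_map (μ := (ℙ : Measure Ω)) (φ := X) (f := fun x : ℝ => x) hX.aemeasurable
      aestronglyMeasurable_id
    rw [hlaw, laplace_integral_eq μ b hb] at this
    rw [← this, (laplace_mom1 μ b hb).2]
  · exact (memLp_map_measure_iff aestronglyMeasurable_id hX.aemeasurable).1
      (by rw [hlaw]
          exact (memLp_two_iff_integrable_sq aestronglyMeasurable_id).2 (by simpa using hsq))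
  · have := integral_map (μ := (ℙ : Measure Ω)) (φ := X) (f := fun x : ℝ => x ^ 2) hX.aemeasurable
      (by fun_prop)
    rw [hlaw, laplace_integral_eq μ b hb] at this
    rw [← this, (laplace_mom2 μ b hb).2]

/-- The Laplace density estimator
`d̃ = ((1/m)·∑ᵢ xᵢ − μ_init)/(μ_upd − μ_init) + L`, where `xᵢ ~ Laplace(μ_upd, b)` for
appeared users (`i ∈ S`, `|S| = d·m`), `xᵢ ~ Laplace(μ_init, b)` otherwise, all independent,
and `L ~ Laplace(0, 1/(εm))`, with `μ_upd − μ_init = εb`, is an unbiased estimate of `d`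
with mean squared error exactly `2(m+1)/(m²ε²)`. -/
theorem laplace_density_estimator_moments {Ω : Type*} [MeasureSpace Ω]
    [IsProbabilityMeasure (ℙ : Measure Ω)] (ε b : ℝ) (hε : 0 < ε) (hb : 0 < b)
    (m : ℕ) (hm : 1 ≤ m) (μinit μupd : ℝ) (hμ : μinit < μupd)
    (hεb : μupd - μinit = ε * b)
    (S : Finset (Fin m)) (d : ℝ) (hd : (S.card : ℝ) = d * m)
    (x : Fin m → Ω → ℝ) (hxmeas : ∀ i, Measurable (x i))
    (hxlaw : ∀ i, Measure.map (x i) ℙ =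
      if i ∈ S then laplaceMeasure μupd b else laplaceMeasure μinit b)
    (L : Ω → ℝ) (hLmeas : Measurable L)
    (hLlaw : Measure.map L ℙ = laplaceMeasure 0 (1 / (ε * m)))
    (hindep : iIndepFun
      (fun o : Option (Fin m) => o.elim L x) ℙ) :
    (∫ ω, ((1 / m) * ∑ i, x i ω - μinit) / (μupd - μinit) + L ω ∂ℙ) = d ∧
    (∫ ω, (((1 / m) * ∑ i, x i ω - μinit) / (μupd - μinit) + L ω - d) ^ 2 ∂ℙ) =
      2 * (m + 1) / ((m : ℝ) ^ 2 * ε ^ 2) := by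
  classical
  have hmpos : (0 : ℝ) < m := by exact_mod_cast hm
  have hm0 : (m : ℝ) ≠ 0 := hmpos.ne'
  set Δ : ℝ := μupd - μinit with hΔdef
  have hΔpos : 0 < Δ := sub_pos.2 hμ
  have hΔ0 : Δ ≠ 0 := hΔpos.ne'
  set a : ℝ := 1 / (m * Δ) with ha
  set bL : ℝ := 1 / (ε * m) with hbLdef
  have hbL : 0 < bL := by positivity
  set μs : Fin m → ℝ := fun i => if i ∈ S then μupd else μinit with hμs
  -- facts about each random variable
  have factsx : ∀ i, Integrable (x i) ℙ ∧ (∫ ω, x i ω ∂ℙ) = μs i ∧ MemLp (x i) 2 ℙ ∧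
      (∫ ω, (x i ω) ^ 2 ∂ℙ) = (μs i) ^ 2 + 2 * b ^ 2 := by
    intro i
    refine rv_facts (x i) (hxmeas i) (μs i) b hb ?_
    rw [hxlaw i, hμs]
    by_cases h : i ∈ S <;> simp [h]
  have factsL := rv_facts L hLmeas 0 bL hbL hLlaw
  -- the centered family
  set φ : Option (Fin m) → ℝ → ℝ :=
    fun o => Option.elim o id (fun i y => a * (y - μs i)) with hφ
  have hφmeas : ∀ o, Measurable (φ o) := by
    rintro (_ | i)
    · exact measurable_id
    · exact (measurable_id.sub measurable_const).const_mul a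
  set Z : Option (Fin m) → Ω → ℝ := fun o => φ o ∘ (o.elim L x) with hZ
  have hZindep : iIndepFun Z ℙ := hindep.comp φ hφmeas
  have hZnone : Z none = L := rfl
  have hZsome : ∀ i, Z (some i) = fun ω => a * (x i ω - μs i) := fun i => rfl
  have hZmem : ∀ o, MemLp (Z o) 2 ℙ := by
    rintro (_ | i)
    · exact factsL.2.2.1
    · rw [hZsome i]
      exact ((factsx i).2.2.1.sub (memLp_const (μs i))).const_mul a
  have hZint : ∀ o, Integrable (Z o) ℙ := fun o => (hZmem o).integrable one_le_two
  have hZmean : ∀ o, (∫ ω, Z o ω ∂ℙ) = 0 := by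
    rintro (_ | i)
    · exact factsL.2.1
    · rw [hZsome i]
      rw [integral_const_mul, integral_sub (factsx i).1 (integrable_const _),
        (factsx i).2.1, integral_const]
      simp
  have hZvar : variance (Z none) ℙ = 2 * bL ^ 2 ∧
      ∀ i, variance (Z (some i)) ℙ = 2 * a ^ 2 * b ^ 2 := by
    constructor
    · rw [variance_eq_sub (hZmem none)]
      have h2 : (∫ ω, (Z none ^ 2) ω ∂ℙ) = 0 ^ 2 + 2 * bL ^ 2 := by
        simpa [hZnone] using factsL.2.2.2
      rw [h2, hZmean none]
      ring
    · intro i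
      rw [variance_eq_sub (hZmem (some i))]
      have hsq : Integrable (fun ω => (x i ω) ^ 2) ℙ := by
        simpa [Pi.pow_apply] using (factsx i).2.2.1.integrable_sq
      have key : ∀ ω, ((Z (some i)) ^ 2) ω =
          a ^ 2 * (x i ω) ^ 2 - (2 * a ^ 2 * μs i) * x i ω + a ^ 2 * (μs i) ^ 2 := by
        intro ω; simp only [Pi.pow_apply, hZsome i]; ring
      have h2 : (∫ ω, (Z (some i) ^ 2) ω ∂ℙ) = 2 * a ^ 2 * b ^ 2 := by
        simp_rw [key]
        have I1 : Integrable (fun ω => a ^ 2 * x i ω ^ 2 - 2 * a ^ 2 * μs i * x i ω) ℙ := by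
          exact (hsq.const_mul _).sub ((factsx i).1.const_mul _)
        rw [integral_add I1 (integrable_const _),
          integral_sub (hsq.const_mul _) ((factsx i).1.const_mul _),
          integral_const_mul, integral_const_mul, (factsx i).2.2.2, (factsx i).2.1,
          integral_const]
        simp only [probReal_univ, smul_eq_mul, one_mul]
        ring
      rw [h2, hZmean (some i)]
      ring
  -- sum of the mean parameters
  have hμsum : ∑ i, μs i = m * μinit + S.card * Δ := by
    have h1 : ∀ i : Fin m, μs i = μinit + (if i ∈ S then Δ else 0) := by
      intro i; rw [hμs]; by_cases h : i ∈ S <;> simp [h, hΔdef]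
    simp_rw [h1, Finset.sum_add_distrib, Finset.sum_const, Finset.sum_ite_mem,
      Finset.univ_inter, Finset.sum_const]
    simp [mul_comm]
  -- pointwise identity
  have hsum : ∀ ω, ((1 / m) * ∑ i, x i ω - μinit) / (μupd - μinit) + L ω - d
      = ∑ o : Option (Fin m), Z o ω := by
    intro ω
    rw [Fintype.sum_option, hZnone]
    simp_rw [hZsome]
    simp_rw [mul_sub]
    rw [Finset.sum_sub_distrib, ← Finset.mul_sum, ← Finset.mul_sum, hμsum, hd, ← hΔdef, ha]
    field_simp
    ring
  have hWint : Integrable (fun ω => ∑ o : Option (Fin m), Z o ω) ℙ :=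
    integrable_finset_sum _ (fun o _ => hZint o)
  have hWsum0 : (∫ ω, ∑ o : Option (Fin m), Z o ω ∂ℙ) = 0 := by
    rw [integral_finset_sum _ (fun o _ => hZint o)]
    simp [hZmean]
  constructor
  · have he : (fun ω => ((1 / m) * ∑ i, x i ω - μinit) / (μupd - μinit) + L ω)
        = fun ω => (∑ o : Option (Fin m), Z o ω) + d := by
      funext ω
      have := hsum ω
      linarith
    rw [he, integral_add hWint (integrable_const d), hWsum0, integral_const]
    simp
  · have he : (fun ω => (((1 / m) * ∑ i, x i ω - μinit) / (μupd - μinit) + L ω - d) ^ 2)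
        = fun ω => ((∑ o : Option (Fin m), Z o) ^ 2) ω := by
      funext ω
      rw [Pi.pow_apply, Finset.sum_apply, ← hsum ω]
    rw [he]
    have hWmem : MemLp (∑ o : Option (Fin m), Z o) 2 ℙ :=
      memLp_finset_sum' _ (fun o _ => hZmem o)
    have hvd := variance_eq_sub (μ := ℙ) hWmem
    have hWs0 : (∫ ω, (∑ o : Option (Fin m), Z o) ω ∂ℙ) = 0 := by
      rw [show (fun ω => (∑ o : Option (Fin m), Z o) ω) = fun ω => ∑ o : Option (Fin m), Z o ω
        from funext fun ω => Finset.sum_apply ω _ _]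
      exact hWsum0
    have hvarsum := IndepFun.variance_sum (μ := ℙ) (X := Z) (s := Finset.univ)
      (fun o _ => hZmem o) (fun o _ o' _ h => hZindep.indepFun h)
    have : (∫ ω, ((∑ o : Option (Fin m), Z o) ^ 2) ω ∂ℙ)
        = ∑ o : Option (Fin m), variance (Z o) ℙ := by
      rw [← hvarsum, hvd, hWs0]
      norm_num
    rw [this, Fintype.sum_option, hZvar.1]
    simp_rw [hZvar.2]
    rw [Finset.sum_const, Finset.card_univ, Fintype.card_fin, nsmul_eq_mul]
    rw [hbLdef, ha, hεb]
    field_simp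
    ring
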